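/- Let a > 0, r > 0, α ∈ [0, π/2), and for θ' ∈ (−π/2 + α, π/2 − α) set θ''(θ') = log( (cos α − sin θ')/cos(α − θ') ). Then e^{−θ''(θ')} sin(α + θ') + e^{θ''(θ')} sin(α − θ') → +∞ as θ' → (π/2 − α)⁻; equivalently, Re( i · a e^{iα} · r · cos(θ' + iθ''(θ')) ) → −∞, so the modulus of the rapidly-varying factor of the steepest-descent integrand tends to 0 at the endpoint of the contour. -/

import Mathlib

open Complex Filter Topology

lemma re_ident (a r α θ t : ℝ) :
    (Complex.I * (a * Complex.exp (Complex.I * α)) * r *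
      Complex.cos ((θ : ℂ) + Complex.I * (t : ℝ))).re
      = -(a*r/2) * (Real.exp (-t) * Real.sin (α + θ) + Real.exp t * Real.sin (α - θ)) := by
  simp [Complex.cos, Complex.exp_re, Complex.exp_im, Complex.exp_add, Real.sin_add, Real.sin_sub,
    Complex.mul_re, Complex.mul_im, Real.exp_neg]
  ring


set_option maxHeartbeats 1000000 in
/-- Exponential decay of the steepest-descent integrand at the endpoint of the contour: for
`k₀ = a e^{iα}` with `a > 0`, `r > 0`, loss angle `α ∈ [0, π/2)`, and
`θ''(θ') = log((cos α - sin θ')/cos(α - θ'))`, the quantity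
`e^{-θ''} sin(α + θ') + e^{θ''} sin(α - θ')` tends to `+∞` as `θ' → (π/2 - α)⁻`;
equivalently, `Re(i a e^{iα} r cos(θ' + iθ''(θ'))) → -∞`, so the modulus of the
rapidly-varying factor tends to `0` at the endpoint. -/
theorem stmt14 (a : ℝ) (ha : 0 < a) (r : ℝ) (hr : 0 < r) (α : ℝ)
    (hα : α ∈ Set.Ico 0 (Real.pi / 2)) :
    Tendsto (fun θ' : ℝ =>
        Real.exp (-(Real.log ((Real.cos α - Real.sin θ') / Real.cos (α - θ')))) *
            Real.sin (α + θ') +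
          Real.exp (Real.log ((Real.cos α - Real.sin θ') / Real.cos (α - θ'))) *
            Real.sin (α - θ'))
        (nhdsWithin (Real.pi / 2 - α) (Set.Iio (Real.pi / 2 - α))) atTop ∧
      Tendsto (fun θ' : ℝ =>
          (Complex.I * (a * Complex.exp (Complex.I * α)) * r *
            Complex.cos ((θ' : ℂ) +
              Complex.I *
                (Real.log ((Real.cos α - Real.sin θ') / Real.cos (α - θ'))))).re)
        (nhdsWithin (Real.pi / 2 - α) (Set.Iio (Real.pi / 2 - α))) atBot := by
  obtain ⟨hα0, hα2⟩ := hα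
  have hπ := Real.pi_pos
  set c := Real.pi / 2 - α with hcdef
  clear_value c
  have hc : 0 < c := by rw [hcdef]; linarith
  set l := nhdsWithin c (Set.Iio c) with hl
  set x : ℝ → ℝ := fun θ' => (Real.cos α - Real.sin θ') / Real.cos (α - θ') with hxdef
  set X : ℝ → ℝ := fun θ' => Real.sin ((c - θ')/2) / Real.cos (α + (c - θ')/2) with hXdef
  have hmem : Set.Ioo 0 c ∈ l := Ioo_mem_nhdsLT_of_mem ⟨hc, le_refl c⟩
  -- pointwise facts on Ioo 0 c
  have hfacts : ∀ θ' ∈ Set.Ioo 0 c, x θ' = X θ' ∧ 0 < x θ' := by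
    intro θ' hθ'
    obtain ⟨h1, h2⟩ := hθ'
    have hu0 : 0 < c - θ' := by linarith
    have huc : c - θ' < c := by linarith
    have hsplit : α + (c - θ') / 2 < Real.pi / 2 := by rw [hcdef] at huc ⊢; linarith
    have hs : 0 < Real.sin (α + (c - θ') / 2) :=
      Real.sin_pos_of_pos_of_lt_pi (by linarith) (by linarith)
    have hd : 0 < Real.cos (α + (c - θ') / 2) :=
      Real.cos_pos_of_mem_Ioo ⟨by linarith, hsplit⟩
    have hsu : 0 < Real.sin ((c - θ') / 2) :=
      Real.sin_pos_of_pos_of_lt_pi (by linarith) (by rw [hcdef] at huc; linarith)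
    have key1 : Real.cos (α - θ') =
        2 * Real.sin (α + (c - θ') / 2) * Real.cos (α + (c - θ') / 2) := by
      have h : α - θ' = 2 * (α + (c - θ') / 2) - Real.pi / 2 := by rw [hcdef]; ring
      rw [h, Real.cos_sub_pi_div_two, Real.sin_two_mul]
    have key2 : Real.cos α - Real.sin θ' =
        2 * Real.sin (α + (c - θ') / 2) * Real.sin ((c - θ') / 2) := by
      have hsin : Real.sin θ' = Real.cos (α + (c - θ')) := by
        have h2' : α + (c - θ') = Real.pi / 2 - θ' := by rw [hcdef]; ring
        rw [h2', Real.cos_pi_div_two_sub]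
      rw [hsin, Real.cos_sub_cos]
      rw [show (α + (α + (c - θ'))) / 2 = α + (c - θ') / 2 by ring,
        show (α - (α + (c - θ'))) / 2 = -((c - θ') / 2) by ring, Real.sin_neg]
      ring
    have h2s : (2 : ℝ) * Real.sin (α + (c - θ') / 2) ≠ 0 := by positivity
    have hxX : x θ' = X θ' := by
      simp only [hxdef, hXdef, key1, key2]
      rw [mul_div_mul_left _ _ h2s]
    refine ⟨hxX, ?_⟩
    rw [hxX]
    simp only [hXdef]
    positivity
  have hxX : x =ᶠ[l] X := by
    filter_upwards [hmem] with θ' hθ' using (hfacts θ' hθ').1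
  have hxpos : ∀ᶠ θ' in l, 0 < x θ' := by
    filter_upwards [hmem] with θ' hθ' using (hfacts θ' hθ').2
  have hcosα : 0 < Real.cos α := Real.cos_pos_of_mem_Ioo ⟨by linarith, hα2⟩
  have hXc : Tendsto X (nhds c) (nhds 0) := by
    have h1 : Tendsto (fun θ' => Real.sin ((c - θ')/2)) (nhds c) (nhds 0) := by
      have := (Real.continuous_sin.comp
        (by fun_prop : Continuous fun θ' : ℝ => (c - θ')/2)).tendsto c
      simpa [Function.comp_def] using this
    have h2 : Tendsto (fun θ' => Real.cos (α + (c - θ')/2)) (nhds c) (nhds (Real.cos α)) := by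
      have := (Real.continuous_cos.comp
        (by fun_prop : Continuous fun θ' : ℝ => α + (c - θ')/2)).tendsto c
      simpa [Function.comp_def] using this
    simpa [hXdef, Pi.div_def] using h1.div h2 (ne_of_gt hcosα)
  have hx0 : Tendsto x l (nhds 0) :=
    ((hXc.mono_left nhdsWithin_le_nhds)).congr' hxX.symm
  have hx0' : Tendsto x l (nhdsWithin 0 (Set.Ioi 0)) := by
    rw [tendsto_nhdsWithin_iff]
    exact ⟨hx0, hxpos⟩
  have hinv : Tendsto (fun θ' => (x θ')⁻¹) l atTop :=
    tendsto_inv_nhdsGT_zero.comp hx0'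
  have hac : α + c = Real.pi / 2 := by rw [hcdef]; ring
  have hsin1 : Tendsto (fun θ' => Real.sin (α + θ')) l (nhds 1) := by
    have hcont : Continuous fun θ' : ℝ => Real.sin (α + θ') := by fun_prop
    have h1 := hcont.tendsto c
    rw [hac, Real.sin_pi_div_two] at h1
    exact h1.mono_left nhdsWithin_le_nhds
  have hsin2 : Tendsto (fun θ' => Real.sin (α - θ')) l (nhds (Real.sin (α - c))) := by
    have hcont : Continuous fun θ' : ℝ => Real.sin (α - θ') := by fun_prop
    exact (hcont.tendsto c).mono_left nhdsWithin_le_nhds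
  have term1 : Tendsto (fun θ' => Real.sin (α + θ') * (x θ')⁻¹) l atTop :=
    Tendsto.pos_mul_atTop one_pos hsin1 hinv
  have term2 : Tendsto (fun θ' => x θ' * Real.sin (α - θ')) l
      (nhds (0 * Real.sin (α - c))) := hx0.mul hsin2
  have hsum : Tendsto
      (fun θ' => Real.sin (α + θ') * (x θ')⁻¹ + x θ' * Real.sin (α - θ')) l atTop :=
    term1.atTop_add term2
  have heq : (fun θ' => Real.sin (α + θ') * (x θ')⁻¹ + x θ' * Real.sin (α - θ'))
      =ᶠ[l] fun θ' => Real.exp (-(Real.log (x θ'))) * Real.sin (α + θ') +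
          Real.exp (Real.log (x θ')) * Real.sin (α - θ') := by
    filter_upwards [hxpos] with θ' hp
    rw [Real.exp_log hp, Real.exp_neg, Real.exp_log hp]
    ring
  have first : Tendsto (fun θ' : ℝ =>
        Real.exp (-(Real.log ((Real.cos α - Real.sin θ') / Real.cos (α - θ')))) *
            Real.sin (α + θ') +
          Real.exp (Real.log ((Real.cos α - Real.sin θ') / Real.cos (α - θ'))) *
            Real.sin (α - θ')) l atTop := hsum.congr' heq
  refine ⟨first, ?_⟩
  have harp : (0:ℝ) < a * r / 2 := by positivity
  have hneg := tendsto_neg_atTop_atBot.comp (first.const_mul_atTop harp)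
  have h2 : Tendsto (fun θ' : ℝ => -(a*r/2) *
      (Real.exp (-(Real.log (x θ'))) * Real.sin (α + θ') +
        Real.exp (Real.log (x θ')) * Real.sin (α - θ'))) l atBot := by
    refine hneg.congr fun θ' => ?_
    simp only [Function.comp, hxdef, neg_mul]
  exact h2.congr fun θ' => (re_ident a r α θ' (Real.log (x θ'))).symm
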